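/- For a positive integer k, there exists a closed k-prince's tour on the 8×8 chessboard if and only if k is odd and k ≤ 7. -/

import Mathlib

/-- The `k`-prince graph on an `m × n` board: cells `(i,j)` and `(u,v)` are adjacent
iff `|i - u| + |j - v| = k`. -/
def princeGraph (m n k : ℕ) : SimpleGraph (Fin m × Fin n) where
  Adj p q := p ≠ q ∧ |(p.1 : ℤ) - (q.1 : ℤ)| + |(p.2 : ℤ) - (q.2 : ℤ)| = k
  symm := ⟨by
    rintro p q ⟨hne, h⟩
    refine ⟨hne.symm, ?_⟩
    rw [abs_sub_comm ((q.1 : ℤ)), abs_sub_comm ((q.2 : ℤ))]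
    exact h⟩
  loopless := ⟨fun p h => h.1 rfl⟩

instance (m n k : ℕ) : DecidableRel (princeGraph m n k).Adj :=
  fun p q => inferInstanceAs (Decidable (p ≠ q ∧ |(p.1 : ℤ) - (q.1 : ℤ)| + |(p.2 : ℤ) - (q.2 : ℤ)| = k))

def ChainP {V : Type*} (G : SimpleGraph V) : V → List V → Prop
  | _, [] => True
  | a, b :: l => G.Adj a b ∧ ChainP G b l

instance instChainPDec {V : Type*} (G : SimpleGraph V) [DecidableRel G.Adj] :
    ∀ (a : V) (l : List V), Decidable (ChainP G a l)
  | _, [] => .isTrue trivial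
  | a, b :: l => @instDecidableAnd _ _ _ (instChainPDec G b l)

def mkWalk {V : Type*} (G : SimpleGraph V) : (u v : V) → (l : List V) →
    ChainP G u (l ++ [v]) → G.Walk u v
  | _, _, [], h => SimpleGraph.Walk.cons h.1 SimpleGraph.Walk.nil
  | _, v, a :: l, h => SimpleGraph.Walk.cons h.1 (mkWalk G a v l h.2)

def cyc1 : List (Fin 8 × Fin 8) := [(0,1), (0,2), (0,3), (0,4), (0,5), (0,6), (0,7), (1,7), (1,6), (1,5), (1,4), (1,3), (1,2), (1,1), (2,1), (2,2), (2,3), (2,4), (2,5), (2,6), (2,7), (3,7), (3,6), (3,5), (3,4), (3,3), (3,2), (3,1), (4,1), (4,2), (4,3), (4,4), (4,5), (4,6), (4,7), (5,7), (5,6), (5,5), (5,4), (5,3), (5,2), (5,1), (6,1), (6,2), (6,3), (6,4), (6,5), (6,6), (6,7), (7,7), (7,6), (7,5), (7,4), (7,3), (7,2), (7,1), (7,0), (6,0), (5,0), (4,0), (3,0), (2,0), (1,0)]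
def cyc3 : List (Fin 8 × Fin 8) := [(1,2), (2,0), (5,0), (7,1), (6,3), (4,2), (2,1), (3,3), (5,4), (5,7), (3,6), (0,6), (1,4), (2,6), (0,5), (1,7), (4,7), (7,7), (6,5), (7,3), (7,6), (4,6), (4,3), (5,1), (3,2), (0,2), (1,0), (2,2), (0,1), (1,3), (3,4), (5,3), (4,1), (1,1), (2,3), (4,4), (5,6), (7,5), (7,2), (6,4), (6,7), (5,5), (2,5), (3,7), (0,7), (0,4), (1,6), (3,5), (2,7), (2,4), (0,3), (1,5), (4,5), (6,6), (7,4), (6,2), (7,0), (4,0), (6,1), (3,1), (5,2), (6,0), (3,0)]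
def cyc5 : List (Fin 8 × Fin 8) := [(5,0), (1,1), (0,5), (3,7), (7,6), (7,1), (6,5), (6,0), (1,0), (5,1), (0,1), (0,6), (2,3), (1,7), (1,2), (4,0), (4,5), (7,3), (6,7), (6,2), (5,6), (1,5), (3,2), (2,6), (2,1), (0,4), (5,4), (7,7), (7,2), (3,3), (7,4), (4,6), (0,7), (3,5), (3,0), (4,4), (2,7), (2,2), (6,1), (5,5), (1,6), (6,6), (4,3), (0,2), (3,4), (5,7), (6,3), (2,4), (4,1), (1,3), (5,2), (2,0), (0,3), (3,1), (7,0), (7,5), (2,5), (4,2), (4,7), (6,4), (3,6), (5,3), (1,4)]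
def cyc7 : List (Fin 8 × Fin 8) := [(4,3), (0,6), (3,2), (1,7), (5,4), (1,1), (4,5), (0,2), (3,6), (2,0), (6,3), (1,5), (5,2), (2,6), (1,0), (4,4), (0,1), (3,5), (7,2), (2,4), (6,1), (5,7), (2,3), (7,1), (3,4), (7,7), (0,7), (3,3), (6,7), (6,0), (7,6), (4,2), (1,6), (5,3), (2,7), (7,5), (5,0), (6,6), (4,1), (3,7), (1,2), (4,6), (2,1), (5,5), (7,0), (2,2), (7,4), (1,3), (5,6), (0,4), (3,0), (6,4), (0,5), (3,1), (6,5), (4,0), (4,7), (5,1), (1,4), (6,2), (0,3), (7,3), (2,5)]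

open SimpleGraph Walk

section cycles

variable {k : ℕ}

lemma ham_of_mkWalk {k : ℕ} (l : List (Fin 8 × Fin 8))
    (hc : ChainP (princeGraph 8 8 k) (0,0) (l ++ [((0,0) : Fin 8 × Fin 8)]))
    (hlen : (mkWalk _ (0,0) (0,0) l hc).length = 64)
    (htrail : (mkWalk _ (0,0) (0,0) l hc).edges.Nodup)
    (hcount : ∀ a : Fin 8 × Fin 8,
      @List.count _ instBEqOfDecidableEq a ((mkWalk _ (0,0) (0,0) l hc).support).tail = 1) :
    ∃ (v : Fin 8 × Fin 8) (p : (princeGraph 8 8 k).Walk v v), p.IsHamiltonianCycle := by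
  refine ⟨(0,0), mkWalk _ (0,0) (0,0) l hc, ?_⟩
  rw [isHamiltonianCycle_iff_isCycle_and_support_count_tail_eq_one]
  refine ⟨?_, hcount⟩
  rw [isCycle_def, isTrail_def]
  refine ⟨htrail, ?_, ?_⟩
  · intro h
    have := congrArg Walk.length h
    rw [hlen] at this
    simp at this
  · exact (@List.nodup_iff_count_le_one _ instBEqOfDecidableEq _ _).2 fun a => le_of_eq (hcount a)

lemma ham1 : ∃ (v : Fin 8 × Fin 8) (p : (princeGraph 8 8 1).Walk v v), p.IsHamiltonianCycle :=
  ham_of_mkWalk cyc1 (by decide) (by decide) (by decide) (by decide)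

lemma ham3 : ∃ (v : Fin 8 × Fin 8) (p : (princeGraph 8 8 3).Walk v v), p.IsHamiltonianCycle :=
  ham_of_mkWalk cyc3 (by decide) (by decide) (by decide) (by decide)

lemma ham5 : ∃ (v : Fin 8 × Fin 8) (p : (princeGraph 8 8 5).Walk v v), p.IsHamiltonianCycle :=
  ham_of_mkWalk cyc5 (by decide) (by decide) (by decide) (by decide)

lemma ham7 : ∃ (v : Fin 8 × Fin 8) (p : (princeGraph 8 8 7).Walk v v), p.IsHamiltonianCycle :=
  ham_of_mkWalk cyc7 (by decide) (by decide) (by decide) (by decide)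

end cycles

/-- parity invariant -/
def F (p : Fin 8 × Fin 8) : ZMod 2 := ((p.1.val + p.2.val : ℕ) : ZMod 2)

lemma F_adj {k : ℕ} (hk : Even k) {p q : Fin 8 × Fin 8}
    (h : (princeGraph 8 8 k).Adj p q) : F p = F q := by
  obtain ⟨-, h2⟩ := h
  obtain ⟨m, hm⟩ := hk
  have hp1 := p.1.isLt; have hp2 := p.2.isLt
  have hq1 := q.1.isLt; have hq2 := q.2.isLt
  have hmod : (p.1.val + p.2.val) % 2 = (q.1.val + q.2.val) % 2 := by
    rcases abs_cases ((p.1 : ℤ) - (q.1 : ℤ)) with ⟨e1, _⟩ | ⟨e1, _⟩ <;>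
      rcases abs_cases ((p.2 : ℤ) - (q.2 : ℤ)) with ⟨e2, _⟩ | ⟨e2, _⟩ <;>
      rw [e1, e2] at h2 <;> omega
  unfold F
  rw [ZMod.natCast_eq_natCast_iff']
  exact hmod

lemma F_walk {k : ℕ} (hk : Even k) {p q : Fin 8 × Fin 8}
    (w : (princeGraph 8 8 k).Walk p q) : F p = F q := by
  induction w with
  | nil => rfl
  | cons h _ ih => exact (F_adj hk h).trans ih

lemma reachable_of_ham {k : ℕ} {v : Fin 8 × Fin 8} {p : (princeGraph 8 8 k).Walk v v}
    (hp : p.IsHamiltonianCycle) (a b : Fin 8 × Fin 8) :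
    (princeGraph 8 8 k).Reachable a b := by
  have ha := hp.mem_support a
  have hb := hp.mem_support b
  exact ((p.takeUntil a ha).reverse.append (p.takeUntil b hb)).reachable

/-- For a positive integer `k`, there exists a closed `k`-prince's tour on the 8×8
chessboard if and only if `k` is odd and `k ≤ 7`. -/
theorem prince_tour_8x8_iff (k : ℕ) (hk : 0 < k) :
    (∃ (v : Fin 8 × Fin 8) (p : (princeGraph 8 8 k).Walk v v), p.IsHamiltonianCycle) ↔
      Odd k ∧ k ≤ 7 := by
  constructor
  · rintro ⟨v, p, hp⟩
    constructor
    · rw [← Nat.not_even_iff_odd]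
      intro hev
      obtain ⟨w⟩ := reachable_of_ham hp ((0 : Fin 8), (0 : Fin 8)) ((0 : Fin 8), (1 : Fin 8))
      exact absurd (F_walk hev w) (by decide)
    · by_contra hgt
      push_neg at hgt
      -- k ≥ 8 : cell (3,3) has no neighbor if k ≥ 9; k = 8 handled by parity too,
      obtain ⟨w⟩ := reachable_of_ham hp ((3 : Fin 8), (3 : Fin 8)) ((0 : Fin 8), (0 : Fin 8))
      have hne : ((3 : Fin 8), (3 : Fin 8)) ≠ ((0 : Fin 8), (0 : Fin 8)) := by decide
      have hnil : ¬ w.Nil := Walk.not_nil_of_ne hne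
      have hadj := w.adj_snd hnil
      obtain ⟨-, h2⟩ := hadj
      set b := w.getVert 1 with hb
      have hb1 := b.1.isLt
      have hb2 := b.2.isLt
      -- need to rule out k = 8 by parity
      rcases Nat.even_or_odd k with hev | hodd
      · obtain ⟨w'⟩ := reachable_of_ham hp ((0 : Fin 8), (0 : Fin 8)) ((0 : Fin 8), (1 : Fin 8))
        exact absurd (F_walk hev w') (by decide)
      · -- k odd, k ≥ 8 hence k ≥ 9; but |3 - b1| + |3 - b2| ≤ 8
        have hk9 : 9 ≤ k := by
          rcases hodd with ⟨m, hm⟩; omega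
        have h3 : ((((3 : Fin 8), (3 : Fin 8)) : Fin 8 × Fin 8).1 : ℤ) = 3 := by decide
        rw [h3] at h2
        have hc1 : ((b.1 : ℤ)) < 8 := by exact_mod_cast hb1
        have hc2 : ((b.2 : ℤ)) < 8 := by exact_mod_cast hb2
        have hc1' : (0:ℤ) ≤ (b.1 : ℤ) := Int.natCast_nonneg _
        have hc2' : (0:ℤ) ≤ (b.2 : ℤ) := Int.natCast_nonneg _
        rcases abs_cases ((3:ℤ) - (b.1 : ℤ)) with ⟨e1, _⟩ | ⟨e1, _⟩ <;>
          rcases abs_cases ((3:ℤ) - (b.2 : ℤ)) with ⟨e2, _⟩ | ⟨e2, _⟩ <;>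
          rw [e1, e2] at h2 <;> omega
  · rintro ⟨⟨m, hm⟩, hle⟩
    interval_cases k
    · exact ham1
    · omega
    · exact ham3
    · omega
    · exact ham5
    · omega
    · exact ham7
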